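/- The language L_2lin1 = { a^{2n+1} b^{2n+1} : n ≥ 0 } over the alphabet {a,b} is accepted by a repetitive deterministic finite automaton with translucent words (RDFAwtw). -/

import Mathlib

/-! Repetitive (non)deterministic finite automata with translucent words. -/

/-- Behavior of the automaton at the end-of-tape marker: halt accepting,
halt rejecting, or (in the repetitive case) continue in one of a set of states. -/
inductive EndBehavior (Q : Type) : Type where
  | accept : EndBehavior Q
  | reject : EndBehavior Q
  | cont : Set Q → EndBehavior Q

/-- `InStar S w` means `w` belongs to the Kleene star `S*` of the set of words `S`. -/
def InStar {α : Type} (S : Set (List α)) (w : List α) : Prop :=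
  ∃ l : List (List α), (∀ u ∈ l, u ∈ S) ∧ l.flatten = w

/-- A (repetitive) nondeterministic finite automaton with translucent words,
with state set `Q` over the alphabet `α`.  `tl q` is the set `τ(q)` of
translucent words of the state `q`, `delta` is the transition function and
`endB q` is the behavior at the end-of-tape marker.  The fields `tl_fin`,
`code_ne`, `prefix_code` and `tl_head` express that each `τ(q)` is finite,
that `τ(q) ∪ Σ_q` is a prefix code (no empty word, and no member is a proper
prefix of another member), and that no word of `τ(q)` begins with a letter
readable in `q`. -/
structure RNFAwtw (α : Type) (Q : Type) : Type where
  init : Set Q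
  tl : Q → Set (List α)
  delta : Q → α → Set Q
  endB : Q → EndBehavior Q
  tl_fin : ∀ q, (tl q).Finite
  code_ne : ∀ q, [] ∉ tl q
  prefix_code : ∀ q,
    ∀ u ∈ tl q ∪ {w | ∃ a, (delta q a).Nonempty ∧ w = [a]},
    ∀ v ∈ tl q ∪ {w | ∃ a, (delta q a).Nonempty ∧ w = [a]},
      u <+: v → u = v
  tl_head : ∀ q, ∀ t ∈ tl q, ∀ a, (delta q a).Nonempty → ¬ [a] <+: t

/-- Configurations: a pair of a state and the remaining tape content, or one
of the two halting configurations. -/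
inductive Conf (α Q : Type) : Type where
  | state : Q → List α → Conf α Q
  | accept : Conf α Q
  | reject : Conf α Q

/-- The single-step computation relation of an RNFAwtw. -/
inductive RNFAwtw.Step {α Q : Type} (A : RNFAwtw α Q) :
    Conf α Q → Conf α Q → Prop where
  | read {q q' : Q} {a : α} {u v : List α} :
      InStar (A.tl q) u → q' ∈ A.delta q a →
      RNFAwtw.Step A (Conf.state q (u ++ a :: v)) (Conf.state q' (u ++ v))
  | stuck {q : Q} {a : α} {u v : List α} :
      InStar (A.tl q) u → A.delta q a = ∅ →
      (∀ t ∈ A.tl q, ¬ t <+: (a :: v)) →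
      RNFAwtw.Step A (Conf.state q (u ++ a :: v)) Conf.reject
  | haltAccept {q : Q} {w : List α} :
      InStar (A.tl q) w → A.endB q = EndBehavior.accept →
      RNFAwtw.Step A (Conf.state q w) Conf.accept
  | haltReject {q : Q} {w : List α} :
      InStar (A.tl q) w → A.endB q = EndBehavior.reject →
      RNFAwtw.Step A (Conf.state q w) Conf.reject
  | goOn {q q' : Q} {w : List α} {S : Set Q} :
      InStar (A.tl q) w → A.endB q = EndBehavior.cont S → q' ∈ S →
      RNFAwtw.Step A (Conf.state q w) (Conf.state q' w)

/-- `A` accepts the word `w`. -/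
def RNFAwtw.Accepts {α Q : Type} (A : RNFAwtw α Q) (w : List α) : Prop :=
  ∃ q0 ∈ A.init, Relation.ReflTransGen A.Step (Conf.state q0 w) Conf.accept

/-- The language accepted by `A`. -/
def RNFAwtw.lang {α Q : Type} (A : RNFAwtw α Q) : Set (List α) :=
  { w | A.Accepts w }

/-- `A` is deterministic: one initial state, at most one transition per
state/letter pair, and at the end-of-tape marker the continuation (if any)
is a single state. -/
def RNFAwtw.Deterministic {α Q : Type} (A : RNFAwtw α Q) : Prop :=
  (∃ q0, A.init = {q0}) ∧
  (∀ q a, (A.delta q a).Subsingleton) ∧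
  (∀ q S, A.endB q = EndBehavior.cont S → ∃ q', S = {q'})

/-- `A` is non-repetitive: at the end-of-tape marker it always halts. -/
def RNFAwtw.NonRepetitive {α Q : Type} (A : RNFAwtw α Q) : Prop :=
  ∀ q S, A.endB q ≠ EndBehavior.cont S

/-- `L` is accepted by some repetitive NFAwtw (with a finite state set). -/
def AcceptedByRNFAwtw {α : Type} (L : Set (List α)) : Prop :=
  ∃ (Q : Type) (_ : Finite Q) (A : RNFAwtw α Q), A.lang = L

/-- `L` is accepted by some repetitive DFAwtw. -/
def AcceptedByRDFAwtw {α : Type} (L : Set (List α)) : Prop :=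
  ∃ (Q : Type) (_ : Finite Q) (A : RNFAwtw α Q), A.Deterministic ∧ A.lang = L

/-- `L` is accepted by some (non-repetitive) NFAwtw. -/
def AcceptedByNFAwtw {α : Type} (L : Set (List α)) : Prop :=
  ∃ (Q : Type) (_ : Finite Q) (A : RNFAwtw α Q), A.NonRepetitive ∧ A.lang = L

/-- `L` is accepted by some (non-repetitive) DFAwtw. -/
def AcceptedByDFAwtw {α : Type} (L : Set (List α)) : Prop :=
  ∃ (Q : Type) (_ : Finite Q) (A : RNFAwtw α Q),
    A.NonRepetitive ∧ A.Deterministic ∧ A.lang = L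

/-- The two-letter alphabet `{a, b}`. -/
inductive Letter : Type where
  | a : Letter
  | b : Letter
deriving DecidableEq

instance : Fintype Letter :=
  ⟨{Letter.a, Letter.b}, fun x => by cases x <;> simp⟩

/-- `L_2lin1 = { a^{2n+1} b^{2n+1} : n ≥ 0 }`. -/
def L2lin1 : Set (List Letter) :=
  { w | ∃ n : ℕ,
      w = List.replicate (2 * n + 1) Letter.a ++ List.replicate (2 * n + 1) Letter.b }

/-! ### Auxiliary development for the proof -/

namespace L2aux
open Letter

/-- `Wd m l = a^m b^l`. -/
def Wd (m l : ℕ) : List Letter :=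
  List.replicate m Letter.a ++ List.replicate l Letter.b

/-- The states of our automaton. -/
inductive St | c1 | m1 | t1 | m2 | p1 | p2 | f1 | f2 | f3
deriving DecidableEq

instance : Fintype St :=
  ⟨{St.c1, St.m1, St.t1, St.m2, St.p1, St.p2, St.f1, St.f2, St.f3},
    fun x => by cases x <;> simp⟩

open St

def T0 : Set (List Letter) := {[a,a],[a,b],[b,b]}
def T2 : Set (List Letter) := {[a,a],[a,b]}
def T3 : Set (List Letter) := {[a,a],[a,b,b],[b,b]}

def tlF : St → Set (List Letter)
  | c1 => T0 | m1 => T2 | t1 => T3 | m2 => T2 | _ => ∅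

def deltaF : St → Letter → Set St
  | m1, Letter.b => {t1}
  | m2, Letter.b => {p1}
  | p1, Letter.a => {p2}
  | p2, Letter.a => {c1}
  | f1, Letter.a => {f2}
  | f2, Letter.b => {f3}
  | _, _ => ∅

def endF : St → EndBehavior St
  | c1 => .cont {m1}
  | m1 => .cont {f1}
  | t1 => .cont {m2}
  | f3 => .accept
  | _ => .reject

lemma sigmaF (q : St) :
    {w : List Letter | ∃ x, (deltaF q x).Nonempty ∧ w = [x]} =
      (match q with
        | m1 | m2 | f2 => ({[b]} : Set (List Letter))
        | p1 | p2 | f1 => ({[a]} : Set (List Letter))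
        | _ => (∅ : Set (List Letter))) := by
  cases q <;>
  · ext w
    constructor
    · rintro ⟨x, hx, rfl⟩
      cases x <;> first
        | exact absurd hx Set.not_nonempty_empty
        | simp
    · intro hw
      first
        | exact hw.elim
        | (rw [Set.mem_singleton_iff] at hw
           subst hw
           exact ⟨_, ⟨_, rfl⟩, rfl⟩)

lemma pc_aux (S : Set (List Letter)) (lst : List (List Letter))
    (hS : ∀ w, w ∈ S ↔ w ∈ lst)
    (hok : ∀ u ∈ lst, ∀ v ∈ lst, u <+: v → u = v) :
    ∀ u ∈ S, ∀ v ∈ S, u <+: v → u = v := by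
  intro u hu v hv hp
  exact hok u ((hS u).1 hu) v ((hS v).1 hv) hp


def M : RNFAwtw Letter St where
  init := {c1}
  tl := tlF
  delta := deltaF
  endB := endF
  tl_fin := by
    intro q
    cases q <;>
      first
        | exact Set.finite_empty
        | exact ((Set.finite_singleton _).insert _).insert _
        | exact (Set.finite_singleton _).insert _
  code_ne := by
    intro q h
    cases q <;>
      first
        | exact h.elim
        | simpa [tlF, T0, T2, T3] using h
  prefix_code := by
    intro q
    rw [sigmaF]
    cases q
    case c1 =>
      refine pc_aux _ [[a,a],[a,b],[b,b]] ?_ (by decide)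
      intro w; simp [tlF, T0]
    case m1 =>
      refine pc_aux _ [[a,a],[a,b],[b]] ?_ (by decide)
      intro w; simp [tlF, T2, Set.mem_union]; tauto
    case t1 =>
      refine pc_aux _ [[a,a],[a,b,b],[b,b]] ?_ (by decide)
      intro w; simp [tlF, T3]
    case m2 =>
      refine pc_aux _ [[a,a],[a,b],[b]] ?_ (by decide)
      intro w; simp [tlF, T2, Set.mem_union]; tauto
    case p1 =>
      refine pc_aux _ [[a]] ?_ (by decide)
      intro w; simp [tlF]
    case p2 =>
      refine pc_aux _ [[a]] ?_ (by decide)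
      intro w; simp [tlF]
    case f1 =>
      refine pc_aux _ [[a]] ?_ (by decide)
      intro w; simp [tlF]
    case f2 =>
      refine pc_aux _ [[b]] ?_ (by decide)
      intro w; simp [tlF]
    case f3 =>
      refine pc_aux _ [] ?_ (by decide)
      intro w; simp [tlF]
  tl_head := by
    intro q t ht x hx
    cases q <;>
      first
        | exact ht.elim
        | (cases x <;>
            first
              | exact absurd hx Set.not_nonempty_empty
              | (simp only [tlF, T0, T2, T3, Set.mem_insert_iff,
                  Set.mem_singleton_iff] at ht
                 rcases ht with rfl | rfl | rfl <;> decide)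
              | (simp only [tlF, T0, T2, T3, Set.mem_insert_iff,
                  Set.mem_singleton_iff] at ht
                 rcases ht with rfl | rfl <;> decide))

lemma M_det : M.Deterministic := by
  refine ⟨⟨c1, rfl⟩, ?_, ?_⟩
  · intro q x
    cases q <;> cases x <;>
      first
        | exact fun y hy => hy.elim
        | exact fun y hy z hz => Eq.trans hy (Eq.symm hz)
  · intro q S h
    cases q <;>
      first
        | (simp [M, endF] at h; done)
        | (have h' := h
           injection h' with h''
           exact ⟨_, h''.symm⟩)

/-! ### `InStar` toolbox -/

lemma instar_nil (S : Set (List Letter)) : InStar S [] :=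
  ⟨[], by simp, rfl⟩

lemma instar_single {S : Set (List Letter)} {t : List Letter} (h : t ∈ S) :
    InStar S t :=
  ⟨[t], by simpa using h, by simp⟩

lemma instar_append {S : Set (List Letter)} {u v : List Letter}
    (hu : InStar S u) (hv : InStar S v) : InStar S (u ++ v) := by
  obtain ⟨l1, h1, e1⟩ := hu
  obtain ⟨l2, h2, e2⟩ := hv
  refine ⟨l1 ++ l2, ?_, by simp [e1, e2]⟩
  intro t ht
  rcases List.mem_append.1 ht with h | h
  · exact h1 t h
  · exact h2 t h

lemma instar_empty {u : List Letter} (h : InStar (∅ : Set (List Letter)) u) :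
    u = [] := by
  obtain ⟨l, hl, e⟩ := h
  cases l with
  | nil => exact e.symm
  | cons t l' => exact absurd (hl t (by simp)) (fun hh => hh)

lemma repl_add2 (x : Letter) (n : ℕ) :
    List.replicate (n+2) x = x :: x :: List.replicate n x := by
  simp [List.replicate_succ]

lemma repl_two (x : Letter) (n : ℕ) :
    List.replicate (2*(n+1)) x = x :: x :: List.replicate (2*n) x := by
  rw [show 2*(n+1) = (2*n)+1+1 by ring]
  simp [List.replicate_succ]

lemma instar_aa {S : Set (List Letter)} (h : [a,a] ∈ S) :
    ∀ k, InStar S (List.replicate (2*k) Letter.a)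
  | 0 => by simpa using instar_nil S
  | (k+1) => by
      rw [repl_two]
      exact instar_append (instar_single h) (instar_aa h k)

lemma instar_bb {S : Set (List Letter)} (h : [b,b] ∈ S) :
    ∀ k, InStar S (List.replicate (2*k) Letter.b)
  | 0 => by simpa using instar_nil S
  | (k+1) => by
      rw [repl_two]
      exact instar_append (instar_single h) (instar_bb h k)

/-- Key impossibility: a word of the form `a^{2i} b a ⋯` is not in the star of a
set whose words all come from `{aa, ab, bb, abb}`. -/
lemma noBA {S : Set (List Letter)}
    (hS : ∀ t ∈ S, t = [a,a] ∨ t = [a,b] ∨ t = [b,b] ∨ t = [a,b,b]) :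
    ∀ (i : ℕ) (rest : List Letter),
      ¬ InStar S (List.replicate (2*i) Letter.a ++ Letter.b :: Letter.a :: rest) := by
  intro i
  induction i with
  | zero =>
      rintro rest ⟨l, hl, hfl⟩
      cases l with
      | nil => simp at hfl
      | cons t l' =>
          rcases hS t (hl t (by simp)) with rfl | rfl | rfl | rfl <;>
            simp [List.flatten_cons] at hfl
  | succ i ih =>
      rintro rest ⟨l, hl, hfl⟩
      rw [repl_two] at hfl
      cases l with
      | nil => simp at hfl
      | cons t l' =>
          rcases hS t (hl t (by simp)) with rfl | rfl | rfl | rfl <;>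
            simp [List.flatten_cons] at hfl
          exact ih rest ⟨l', fun t ht => hl t (by simp [ht]), by simpa using hfl⟩

/-- Characterization of the members of `{aa, ab}*` that occur as prefixes of
a word of the form `a^m b^l`. -/
lemma star2_aux :
    ∀ (ls : List (List Letter)), (∀ t ∈ ls, t ∈ T2) →
      ∀ (m l : ℕ) (v : List Letter), ls.flatten ++ v = Wd m l →
        (∃ i, ls.flatten = List.replicate (2*i) Letter.a ∧ 2*i ≤ m) ∨
          (ls.flatten = List.replicate m Letter.a ++ [Letter.b] ∧ m % 2 = 1 ∧ 1 ≤ l) := by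
  intro ls
  induction ls with
  | nil =>
      intro _ m l v _
      exact Or.inl ⟨0, by simp, Nat.zero_le m⟩
  | cons t ls ih =>
      intro hmem m l v h
      have ht : t = [a,a] ∨ t = [a,b] := by
        have := hmem t (by simp)
        simpa [T2] using this
      have hls : ∀ t' ∈ ls, t' ∈ T2 := fun t' ht' => hmem t' (by simp [ht'])
      rcases ht with rfl | rfl
      · match m with
        | 0 => exfalso; cases l <;> simp [Wd, List.replicate_succ, List.flatten_cons] at h
        | 1 => exfalso; cases l <;> simp [Wd, List.replicate_succ, List.flatten_cons] at h
        | (m+2) =>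
          have h' : ls.flatten ++ v = Wd m l := by
            simpa [Wd, repl_add2, List.flatten_cons] using h
          rcases ih hls m l v h' with ⟨i, hi, hle⟩ | ⟨hu, hpar, hl1⟩
          · refine Or.inl ⟨i+1, ?_, by omega⟩
            rw [repl_two]
            simp [List.flatten_cons, hi]
          · refine Or.inr ⟨?_, by omega, hl1⟩
            rw [repl_add2]
            simp [List.flatten_cons, hu]
      · match m with
        | 0 => exfalso; cases l <;> simp [Wd, List.replicate_succ, List.flatten_cons] at h
        | 1 =>
          obtain ⟨l', rfl⟩ : ∃ l', l = l' + 1 := by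
            cases l with
            | zero => exfalso; simp [Wd, List.replicate_succ, List.flatten_cons] at h
            | succ l' => exact ⟨l', rfl⟩
          have h' : ls.flatten ++ v = Wd 0 l' := by
            simpa [Wd, List.replicate_succ, List.flatten_cons] using h
          rcases ih hls 0 l' v h' with ⟨i, hi, hle⟩ | ⟨_, hpar, _⟩
          · have hi0 : i = 0 := by omega
            subst hi0
            have : ls.flatten = [] := by simpa using hi
            refine Or.inr ⟨?_, by decide, by omega⟩
            simp [List.flatten_cons, this, List.replicate_succ]
          · exact absurd hpar (by decide)
        | (m+2) =>
          exfalso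
          simp [Wd, repl_add2, List.flatten_cons] at h

lemma T0_shape : ∀ t ∈ T0, t = [a,a] ∨ t = [a,b] ∨ t = [b,b] ∨ t = [a,b,b] := by
  intro t ht; simp [T0] at ht; tauto

lemma T3_shape : ∀ t ∈ T3, t = [a,a] ∨ t = [a,b] ∨ t = [b,b] ∨ t = [a,b,b] := by
  intro t ht; simp [T3] at ht; tauto

lemma main_split {u v : List Letter} {m l : ℕ} (hm : m % 2 = 1)
    (hu : InStar T2 u) (huv : u ++ v = Wd m l) :
    (∃ i j, m = 2*i + j + 1 ∧ u = List.replicate (2*i) Letter.a ∧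
        v = Letter.a :: (List.replicate j Letter.a ++ List.replicate l Letter.b)) ∨
    (1 ≤ l ∧ u = List.replicate m Letter.a ++ [Letter.b] ∧
        v = List.replicate (l-1) Letter.b) := by
  obtain ⟨ls, hls, hfl⟩ := hu
  rcases star2_aux ls hls m l v (by rw [hfl]; exact huv) with ⟨i, hi, hle⟩ | ⟨hub, _, hl1⟩
  · rw [hfl] at hi
    have h2i : 2*i < m := by omega
    obtain ⟨j, hj⟩ : ∃ j, m = 2*i + j + 1 := ⟨m - 2*i - 1, by omega⟩
    have hsplit : List.replicate m Letter.a =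
        List.replicate (2*i) Letter.a ++ (Letter.a :: List.replicate j Letter.a) := by
      rw [hj, show 2*i + j + 1 = 2*i + (j+1) by ring, List.replicate_add,
        List.replicate_succ]
    have hv : v = Letter.a :: (List.replicate j Letter.a ++ List.replicate l Letter.b) := by
      have h2 := huv
      rw [hi, Wd, hsplit, List.append_assoc] at h2
      have := List.append_cancel_left h2
      simpa using this
    exact Or.inl ⟨i, j, hj, hi, hv⟩
  · rw [hfl] at hub
    obtain ⟨l', rfl⟩ : ∃ l', l = l' + 1 := ⟨l - 1, by omega⟩
    have hv : v = List.replicate l' Letter.b := by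
      have h2 := huv
      rw [hub, Wd, List.append_assoc, List.replicate_succ] at h2
      have := List.append_cancel_left h2
      simpa using this
    exact Or.inr ⟨by omega, hub, by simpa using hv⟩

lemma glue (n l : ℕ) :
    (List.replicate n Letter.a ++ [Letter.b]) ++ Letter.b :: List.replicate l Letter.b
      = Wd n (l+2) := by
  simp [Wd, repl_add2, List.append_assoc]

lemma lemA {w : List Letter} (hw : InStar T0 w)
    (h : w = [a,b] ∨ ∃ u v, InStar T2 u ∧
        (∃ k, u ++ v = Wd (2*k+3) (2*k+2)) ∧ w = u ++ Letter.b :: v) :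
    ∃ k, w = Wd (2*k+1) (2*k+1) := by
  rcases h with rfl | ⟨u, v, hu, ⟨k, huv⟩, rfl⟩
  · exact ⟨0, by decide⟩
  · rcases main_split (by omega) hu huv with ⟨i, j, hm, hue, hve⟩ | ⟨hl1, hue, hve⟩
    · exfalso
      apply noBA T0_shape i (List.replicate j Letter.a ++ List.replicate (2*k+2) Letter.b)
      have he : u ++ Letter.b :: v
          = List.replicate (2*i) Letter.a ++ Letter.b :: Letter.a ::
              (List.replicate j Letter.a ++ List.replicate (2*k+2) Letter.b) := by
        rw [hue, hve]
      rw [← he]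
      exact hw
    · refine ⟨k+1, ?_⟩
      rw [hue, hve, show (2*k+2) - 1 = 2*k+1 from by omega, glue]
      congr 1 <;> omega

lemma lemB {w : List Letter} (hw : InStar T3 w)
    (h : ∃ u v, InStar T2 u ∧
        (∃ k, u ++ v = Wd (2*k+3) (2*k+1)) ∧ w = u ++ Letter.b :: v) :
    ∃ k, w = Wd (2*k+3) (2*k+2) := by
  obtain ⟨u, v, hu, ⟨k, huv⟩, rfl⟩ := h
  rcases main_split (by omega) hu huv with ⟨i, j, hm, hue, hve⟩ | ⟨hl1, hue, hve⟩
  · exfalso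
    apply noBA T3_shape i (List.replicate j Letter.a ++ List.replicate (2*k+1) Letter.b)
    have he : u ++ Letter.b :: v
        = List.replicate (2*i) Letter.a ++ Letter.b :: Letter.a ::
            (List.replicate j Letter.a ++ List.replicate (2*k+1) Letter.b) := by
      rw [hue, hve]
    rw [← he]
    exact hw
  · refine ⟨k, ?_⟩
    rw [hue, hve, show (2*k+1) - 1 = 2*k from by omega, glue]

/-! ### The invariant -/

def Phi : Conf Letter St → Prop
  | Conf.accept => True
  | Conf.reject => False
  | Conf.state q w =>
    match q with
    | c1 => ∃ k, w = Wd (2*k+1) (2*k+1)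
    | m1 => w = [Letter.a, Letter.b] ∨ ∃ u v, InStar T2 u ∧
        (∃ k, u ++ v = Wd (2*k+3) (2*k+2)) ∧ w = u ++ Letter.b :: v
    | t1 => ∃ k, w = Wd (2*k+3) (2*k+2)
    | m2 => ∃ u v, InStar T2 u ∧
        (∃ k, u ++ v = Wd (2*k+3) (2*k+1)) ∧ w = u ++ Letter.b :: v
    | p1 => ∃ k, w = Wd (2*k+3) (2*k+1)
    | p2 => ∃ k, w = Wd (2*k+2) (2*k+1)
    | f1 => w = [Letter.a, Letter.b]
    | f2 => w = [Letter.b]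
    | f3 => w = []

lemma Wd_cons_a (m l : ℕ) : Letter.a :: Wd m l = Wd (m+1) l := by
  simp [Wd, List.replicate_succ]

lemma back {c c' : Conf Letter St} (h : M.Step c c') (h' : Phi c') : Phi c := by
  cases h with
  | @read q q' x u v hu hq =>
    cases q with
    | c1 => cases x <;> exact hq.elim
    | t1 => cases x <;> exact hq.elim
    | f3 => cases x <;> exact hq.elim
    | m1 =>
      cases x with
      | a => exact hq.elim
      | b =>
        have hq' : q' = t1 := hq
        subst hq'
        simp only [Phi] at h' ⊢
        exact Or.inr ⟨u, v, hu, h', rfl⟩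
    | m2 =>
      cases x with
      | a => exact hq.elim
      | b =>
        have hq' : q' = p1 := hq
        subst hq'
        simp only [Phi] at h' ⊢
        exact ⟨u, v, hu, h', rfl⟩
    | p1 =>
      cases x with
      | b => exact hq.elim
      | a =>
        have hq' : q' = p2 := hq
        subst hq'
        have hu0 : u = [] := instar_empty hu
        subst hu0
        simp only [Phi, List.nil_append] at h' ⊢
        obtain ⟨k, hk⟩ := h'
        refine ⟨k, ?_⟩
        rw [hk, Wd_cons_a]
    | p2 =>
      cases x with
      | b => exact hq.elim
      | a =>
        have hq' : q' = c1 := hq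
        subst hq'
        have hu0 : u = [] := instar_empty hu
        subst hu0
        simp only [Phi, List.nil_append] at h' ⊢
        obtain ⟨k, hk⟩ := h'
        refine ⟨k, ?_⟩
        rw [hk, Wd_cons_a]
    | f1 =>
      cases x with
      | b => exact hq.elim
      | a =>
        have hq' : q' = f2 := hq
        subst hq'
        have hu0 : u = [] := instar_empty hu
        subst hu0
        simp only [Phi, List.nil_append] at h' ⊢
        rw [h']
    | f2 =>
      cases x with
      | a => exact hq.elim
      | b =>
        have hq' : q' = f3 := hq
        subst hq'
        have hu0 : u = [] := instar_empty hu
        subst hu0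
        simp only [Phi, List.nil_append] at h' ⊢
        rw [h']
  | stuck _ _ _ => exact h'.elim
  | @haltAccept q w hw he =>
    cases q <;>
      first
        | (simp [M, endF] at he; done)
        | (simp only [Phi]; exact instar_empty hw)
  | haltReject _ _ => exact h'.elim
  | @goOn q q' w S hw he hmem =>
    cases q with
    | c1 =>
      have he2 : EndBehavior.cont ({m1} : Set St) = EndBehavior.cont S := he
      injection he2 with h1
      subst h1
      have hq' : q' = m1 := hmem
      subst hq'
      simp only [Phi] at h' ⊢
      exact lemA hw h'
    | m1 =>
      have he2 : EndBehavior.cont ({f1} : Set St) = EndBehavior.cont S := he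
      injection he2 with h1
      subst h1
      have hq' : q' = f1 := hmem
      subst hq'
      simp only [Phi] at h' ⊢
      exact Or.inl h'
    | t1 =>
      have he2 : EndBehavior.cont ({m2} : Set St) = EndBehavior.cont S := he
      injection he2 with h1
      subst h1
      have hq' : q' = m2 := hmem
      subst hq'
      simp only [Phi] at h' ⊢
      exact lemB hw h'
    | m2 => simp [M, endF] at he
    | p1 => simp [M, endF] at he
    | p2 => simp [M, endF] at he
    | f1 => simp [M, endF] at he
    | f2 => simp [M, endF] at he
    | f3 => simp [M, endF] at he

lemma sound : ∀ {c : Conf Letter St},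
    Relation.ReflTransGen M.Step c Conf.accept → Phi c := by
  intro c h
  induction h using Relation.ReflTransGen.head_induction_on with
  | refl => trivial
  | head hstep _ ih => exact back hstep ih

/-! ### Completeness: the accepting runs -/

lemma run_base :
    Relation.ReflTransGen M.Step (Conf.state f1 [Letter.a, Letter.b]) Conf.accept := by
  have s3 : M.Step (Conf.state f1 ([] ++ Letter.a :: [Letter.b]))
      (Conf.state f2 ([] ++ [Letter.b])) :=
    RNFAwtw.Step.read (instar_nil _) rfl
  have s4 : M.Step (Conf.state f2 ([] ++ Letter.b :: []))
      (Conf.state f3 ([] ++ [])) :=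
    RNFAwtw.Step.read (instar_nil _) rfl
  have s5 : M.Step (Conf.state f3 []) Conf.accept :=
    RNFAwtw.Step.haltAccept (instar_nil _) rfl
  exact .head s3 (.head s4 (.single s5))


lemma wd_split (p q : ℕ) :
    Wd (p+1) (q+2) = (List.replicate p Letter.a ++ [Letter.a, Letter.b])
      ++ Letter.b :: List.replicate q Letter.b := by
  rw [Wd, List.replicate_succ', repl_add2]
  simp only [List.append_assoc, List.cons_append, List.singleton_append, List.nil_append]

lemma wd_split2 (p q : ℕ) :
    (List.replicate p Letter.a ++ [Letter.a, Letter.b]) ++ List.replicate q Letter.b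
      = Wd (p+1) (q+1) := by
  rw [Wd, List.replicate_succ', List.replicate_succ]
  simp only [List.append_assoc, List.cons_append, List.singleton_append, List.nil_append]

lemma wd_split3 (p q : ℕ) :
    Wd (p+1) (q+1) = List.replicate p Letter.a
      ++ ([Letter.a, Letter.b] ++ List.replicate q Letter.b) := by
  rw [Wd, List.replicate_succ', List.replicate_succ]
  simp only [List.append_assoc, List.cons_append, List.singleton_append, List.nil_append]

lemma wd_split4 (p q : ℕ) :
    Wd (p+1) (q+2) = List.replicate p Letter.a
      ++ ([Letter.a, Letter.b, Letter.b] ++ List.replicate q Letter.b) := by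
  rw [Wd, List.replicate_succ', repl_add2]
  simp only [List.append_assoc, List.cons_append, List.singleton_append, List.nil_append]

lemma run_all : ∀ k,
    Relation.ReflTransGen M.Step (Conf.state c1 (Wd (2*k+1) (2*k+1))) Conf.accept := by
  intro k
  induction k with
  | zero =>
    have e : Wd (2*0+1) (2*0+1) = [Letter.a, Letter.b] := by decide
    rw [e]
    have s1 : M.Step (Conf.state c1 [Letter.a, Letter.b])
        (Conf.state m1 [Letter.a, Letter.b]) :=
      RNFAwtw.Step.goOn (instar_single (show [Letter.a,Letter.b] ∈ T0 by simp [T0])) rfl rfl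
    have s2 : M.Step (Conf.state m1 [Letter.a, Letter.b])
        (Conf.state f1 [Letter.a, Letter.b]) :=
      RNFAwtw.Step.goOn (instar_single (show [Letter.a,Letter.b] ∈ T2 by simp [T2])) rfl rfl
    exact .head s1 (.head s2 run_base)
  | succ k ih =>
    have en : 2*(k+1)+1 = 2*k+3 := by ring
    rw [en]
    set U : List Letter := List.replicate (2*k+2) Letter.a ++ [Letter.a, Letter.b] with hU
    have ha3 : List.replicate (2*k+3) Letter.a
        = List.replicate (2*k+2) Letter.a ++ [Letter.a] := by
      rw [show 2*k+3 = (2*k+2)+1 from by ring, List.replicate_succ']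
    have hb3 : List.replicate (2*k+3) Letter.b
        = Letter.b :: Letter.b :: List.replicate (2*k+1) Letter.b := by
      rw [show 2*k+3 = (2*k+1)+2 from by ring, repl_add2]
    have hb2 : List.replicate (2*k+2) Letter.b
        = Letter.b :: Letter.b :: List.replicate (2*k) Letter.b := by
      rw [show 2*k+2 = (2*k)+2 from by ring, repl_add2]
    have haa2 : ∀ S : Set (List Letter), [Letter.a,Letter.a] ∈ S →
        InStar S (List.replicate (2*k+2) Letter.a) := by
      intro S hS
      have := instar_aa hS (k+1)
      rwa [show 2*(k+1) = 2*k+2 from by ring] at this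
    have hUstar : InStar T2 U :=
      instar_append (haa2 _ (by simp [T2])) (instar_single (by simp [T2]))
    have hw0 : InStar T0 (Wd (2*k+3) (2*k+3)) := by
      have e0 := wd_split3 (2*k+2) (2*k+2)
      rw [show 2*k+2+1 = 2*k+3 from by ring] at e0
      rw [e0]
      refine instar_append (haa2 _ (by simp [T0]))
        (instar_append (instar_single (by simp [T0])) ?_)
      have := instar_bb (show [Letter.b,Letter.b] ∈ T0 by simp [T0]) (k+1)
      rwa [show 2*(k+1) = 2*k+2 from by ring] at this
    have st1 : M.Step (Conf.state c1 (Wd (2*k+3) (2*k+3)))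
        (Conf.state m1 (Wd (2*k+3) (2*k+3))) :=
      RNFAwtw.Step.goOn hw0 rfl rfl
    have e1 : Wd (2*k+3) (2*k+3) = U ++ Letter.b :: List.replicate (2*k+1) Letter.b := by
      have h := wd_split (2*k+2) (2*k+1)
      rw [show 2*k+2+1 = 2*k+3 from by ring, show 2*k+1+2 = 2*k+3 from by ring] at h
      rw [hU]
      exact h
    have st2 : M.Step (Conf.state m1 (U ++ Letter.b :: List.replicate (2*k+1) Letter.b))
        (Conf.state t1 (U ++ List.replicate (2*k+1) Letter.b)) :=
      RNFAwtw.Step.read hUstar rfl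
    have e2 : U ++ List.replicate (2*k+1) Letter.b = Wd (2*k+3) (2*k+2) := by
      have h := wd_split2 (2*k+2) (2*k+1)
      rw [show 2*k+2+1 = 2*k+3 from by ring, show 2*k+1+1 = 2*k+2 from by ring] at h
      rw [hU]
      exact h
    have hw1 : InStar T3 (Wd (2*k+3) (2*k+2)) := by
      have e3 := wd_split4 (2*k+2) (2*k)
      rw [show 2*k+2+1 = 2*k+3 from by ring, show 2*k+2 = 2*k+2 from rfl] at e3
      rw [e3]
      exact instar_append (haa2 _ (by simp [T3]))
        (instar_append (instar_single (by simp [T3]))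
          (instar_bb (by simp [T3]) k))
    have st3 : M.Step (Conf.state t1 (Wd (2*k+3) (2*k+2)))
        (Conf.state m2 (Wd (2*k+3) (2*k+2))) :=
      RNFAwtw.Step.goOn hw1 rfl rfl
    have e4 : Wd (2*k+3) (2*k+2) = U ++ Letter.b :: List.replicate (2*k) Letter.b := by
      have h := wd_split (2*k+2) (2*k)
      rw [show 2*k+2+1 = 2*k+3 from by ring] at h
      rw [hU]
      exact h
    have st4 : M.Step (Conf.state m2 (U ++ Letter.b :: List.replicate (2*k) Letter.b))
        (Conf.state p1 (U ++ List.replicate (2*k) Letter.b)) :=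
      RNFAwtw.Step.read hUstar rfl
    have e5 : U ++ List.replicate (2*k) Letter.b = Wd (2*k+3) (2*k+1) := by
      have h := wd_split2 (2*k+2) (2*k)
      rw [show 2*k+2+1 = 2*k+3 from by ring] at h
      rw [hU]
      exact h
    have e6 : Wd (2*k+3) (2*k+1) = [] ++ Letter.a :: Wd (2*k+2) (2*k+1) := by
      rw [show 2*k+3 = (2*k+2)+1 from by ring, ← Wd_cons_a]
      simp
    have st5 : M.Step (Conf.state p1 ([] ++ Letter.a :: Wd (2*k+2) (2*k+1)))
        (Conf.state p2 ([] ++ Wd (2*k+2) (2*k+1))) :=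
      RNFAwtw.Step.read (instar_nil _) rfl
    have e7 : Wd (2*k+2) (2*k+1) = [] ++ Letter.a :: Wd (2*k+1) (2*k+1) := by
      rw [show 2*k+2 = (2*k+1)+1 from by ring, ← Wd_cons_a]
      simp
    have st6 : M.Step (Conf.state p2 ([] ++ Letter.a :: Wd (2*k+1) (2*k+1)))
        (Conf.state c1 ([] ++ Wd (2*k+1) (2*k+1))) :=
      RNFAwtw.Step.read (instar_nil _) rfl
    refine .head st1 ?_
    rw [e1]
    refine .head st2 ?_
    rw [e2]
    refine .head st3 ?_
    rw [e4]
    refine .head st4 ?_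
    rw [e5, e6]
    refine .head st5 ?_
    rw [List.nil_append, e7]
    refine .head st6 ?_
    rw [List.nil_append]
    exact ih

lemma lang_eq : M.lang = L2lin1 := by
  ext w
  constructor
  · rintro ⟨q0, hq0, hrun⟩
    have hq : q0 = c1 := hq0
    subst hq
    have hphi := sound hrun
    simp only [Phi] at hphi
    obtain ⟨k, hk⟩ := hphi
    exact ⟨k, by rw [hk]; rfl⟩
  · rintro ⟨n, rfl⟩
    exact ⟨c1, rfl, run_all n⟩

end L2aux




/-- The language `L_2lin1 = { a^{2n+1} b^{2n+1} : n ≥ 0 }` is accepted by a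
repetitive deterministic finite automaton with translucent words. -/
theorem L2lin1_accepted_by_RDFAwtw : AcceptedByRDFAwtw L2lin1 :=
  ⟨L2aux.St, inferInstance, L2aux.M, L2aux.M_det, L2aux.lang_eq⟩
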